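/- arXiv:2201.01566 — 2 statements merged into one kernel-verified Lean document; each statement's English description precedes it below -/
import Mathlib

section
/- Let N, n, a be natural numbers with a ≤ n ≤ N and let p be a real number with 0 ≤ p < 1. Writing B(k) := C(N,k) p^k (1−p)^{N−k} for the binomial probability mass function, one has the inequality B(n) · C(n,a) ≤ ((N·p/(1−p))^a / a!) · B(n−a). In particular, if p = λh^d and N = (ρ/h)^d (so that Np = λρ^d) with λ h^d ≤ 1/2, then B(n) · C(n,a) · ρ^{−da} ≤ ((2λ)^a / a!) · B(n−a). -/
/-- The binomial probability mass function `B(k) := C(N,k) p^k (1−p)^{N−k}`. -/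
noncomputable def binomialPMF (N : ℕ) (p : ℝ) (k : ℕ) : ℝ :=
  (Nat.choose N k : ℝ) * p ^ k * (1 - p) ^ (N - k)

/-- For `a ≤ n ≤ N` and `0 ≤ p < 1`, the inequality
`B(n) · C(n,a) ≤ ((N·p/(1−p))^a / a!) · B(n−a)`; in particular, if `p = λh^d` and
`N = (ρ/h)^d` (so that `Np = λρ^d`) with `λh^d ≤ 1/2`, then
`B(n) · C(n,a) · ρ^{−da} ≤ ((2λ)^a / a!) · B(n−a)`. -/
theorem binomialPMF_mul_choose_le
    (N n a : ℕ) (han : a ≤ n) (hnN : n ≤ N) (p : ℝ) (hp0 : 0 ≤ p) (hp1 : p < 1) :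
    binomialPMF N p n * (Nat.choose n a : ℝ)
        ≤ ((N : ℝ) * p / (1 - p)) ^ a / (Nat.factorial a : ℝ) * binomialPMF N p (n - a)
    ∧ ∀ (lam h ρ : ℝ) (d : ℕ), 0 ≤ lam → 0 < h → 0 < ρ →
        p = lam * h ^ d → (N : ℝ) = (ρ / h) ^ d → lam * h ^ d ≤ 1 / 2 →
        binomialPMF N p n * (Nat.choose n a : ℝ) * ρ ^ (-(d * a : ℤ))
          ≤ (2 * lam) ^ a / (Nat.factorial a : ℝ) * binomialPMF N p (n - a) := by
  have hq : (0:ℝ) < 1 - p := by linarith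
  -- write n = m + a
  obtain ⟨m, rfl⟩ : ∃ m, n = m + a := ⟨n - a, by omega⟩
  have hma : m + a - a = m := by omega
  have hNm : N - m = (N - (m + a)) + a := by omega
  -- key combinatorial inequality
  have hkey : ((N.choose (m + a)) : ℝ) * ((m + a).choose a : ℝ)
      ≤ (N : ℝ) ^ a / (Nat.factorial a : ℝ) * (N.choose m : ℝ) := by
    have hid : N.choose (m + a) * (m + a).choose a = N.choose a * (N - a).choose m := by
      have := Nat.choose_mul (n := N) (Nat.le_add_left a m)
      simpa using this
    have h1 : ((N.choose a) : ℝ) ≤ (N : ℝ) ^ a / (Nat.factorial a : ℝ) := by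
      simpa using Nat.choose_le_pow_div a N (α := ℝ)
    have h2 : (((N - a).choose m) : ℝ) ≤ (N.choose m : ℝ) := by
      exact_mod_cast Nat.choose_le_choose m (Nat.sub_le N a)
    calc ((N.choose (m + a)) : ℝ) * ((m + a).choose a : ℝ)
        = ((N.choose a) : ℝ) * (((N - a).choose m) : ℝ) := by exact_mod_cast congrArg Nat.cast hid
      _ ≤ ((N : ℝ) ^ a / (Nat.factorial a : ℝ)) * (N.choose m : ℝ) := by
          apply mul_le_mul h1 h2 (by positivity) (by positivity)
  have hfirst : binomialPMF N p (m + a) * ((m + a).choose a : ℝ)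
      ≤ ((N : ℝ) * p / (1 - p)) ^ a / (Nat.factorial a : ℝ) * binomialPMF N p (m + a - a) := by
    rw [hma]
    unfold binomialPMF
    rw [hNm, pow_add, pow_add]
    have : ((N : ℝ) * p / (1 - p)) ^ a = (N:ℝ)^a * p^a / (1-p)^a := by
      rw [div_pow, mul_pow]
    rw [this]
    have hLHS : (N.choose (m+a) : ℝ) * (p ^ m * p ^ a) * (1 - p) ^ (N - (m + a)) * ((m + a).choose a : ℝ)
        = ((N.choose (m + a)) : ℝ) * ((m + a).choose a : ℝ) * (p ^ m * p ^ a * (1 - p) ^ (N - (m + a))) := by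
      ring
    have hRHS : (N:ℝ)^a * p^a / (1-p)^a / (Nat.factorial a : ℝ) *
        ((N.choose m : ℝ) * p ^ m * ((1 - p) ^ (N - (m + a)) * (1 - p) ^ a))
        = ((N : ℝ) ^ a / (Nat.factorial a : ℝ) * (N.choose m : ℝ)) * (p ^ m * p ^ a * (1 - p) ^ (N - (m + a))) := by
      field_simp
    rw [hLHS, hRHS]
    apply mul_le_mul_of_nonneg_right hkey (by positivity)
  refine ⟨hfirst, ?_⟩
  intro lam h ρ d hlam hh hρ hpval hNval hhalf
  have hNp : (N : ℝ) * p = lam * ρ ^ d := by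
    rw [hpval, hNval, div_pow]
    field_simp
  have hq2 : (1:ℝ)/2 ≤ 1 - p := by rw [hpval]; linarith
  have hbound : (N : ℝ) * p / (1 - p) ≤ 2 * lam * ρ ^ d := by
    rw [hNp, div_le_iff₀ hq]
    nlinarith [mul_nonneg hlam (pow_nonneg hρ.le d)]
  have hpos : (0:ℝ) ≤ (N : ℝ) * p / (1 - p) := by positivity
  have hpow : ((N : ℝ) * p / (1 - p)) ^ a ≤ (2 * lam) ^ a * ρ ^ (d * a) := by
    calc ((N : ℝ) * p / (1 - p)) ^ a ≤ (2 * lam * ρ ^ d) ^ a :=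
          pow_le_pow_left₀ hpos hbound a
      _ = (2 * lam) ^ a * ρ ^ (d * a) := by rw [mul_pow, ← pow_mul]
  have hz : (ρ : ℝ) ^ (-(d * a : ℤ)) = (ρ ^ (d * a))⁻¹ := by
    rw [zpow_neg]
    norm_cast
  have hB : 0 ≤ binomialPMF N p (m + a - a) := by
    unfold binomialPMF; positivity
  calc binomialPMF N p (m + a) * ((m + a).choose a : ℝ) * ρ ^ (-(d * a : ℤ))
      ≤ (((N : ℝ) * p / (1 - p)) ^ a / (Nat.factorial a : ℝ) * binomialPMF N p (m + a - a))
          * ρ ^ (-(d * a : ℤ)) := by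
        apply mul_le_mul_of_nonneg_right hfirst
        rw [hz]; positivity
    _ ≤ ((2 * lam) ^ a / (Nat.factorial a : ℝ) * binomialPMF N p (m + a - a)) := by
        rw [hz]
        rw [div_mul_eq_mul_div, div_mul_eq_mul_div, div_mul_eq_mul_div, div_le_div_iff₀
          (by positivity) (by positivity)]
        calc ((N : ℝ) * p / (1 - p)) ^ a * binomialPMF N p (m + a - a) * (ρ ^ (d * a))⁻¹
              * (Nat.factorial a : ℝ)
            ≤ ((2 * lam) ^ a * ρ ^ (d * a)) * binomialPMF N p (m + a - a) * (ρ ^ (d * a))⁻¹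
              * (Nat.factorial a : ℝ) := by
              apply mul_le_mul_of_nonneg_right _ (by positivity)
              apply mul_le_mul_of_nonneg_right _ (by positivity)
              exact mul_le_mul_of_nonneg_right hpow hB
          _ = (2 * lam) ^ a * binomialPMF N p (m + a - a) * (Nat.factorial a : ℝ) := by
              have hne : (ρ:ℝ) ^ (d*a) ≠ 0 := by positivity
              field_simp
end

section
/- Let C ≥ 0. Suppose (f_n) is a sequence of functions [0,1] → ℝ converging pointwise on [0,1] to a function f, and suppose there are real coefficients a_{n,j} (n, j ∈ ℕ) such that |a_{n,j}| ≤ (j!)^2 C^j for all n, j, and such that the uniform Taylor remainder bounds |f_n(p) − ∑_{j=0}^{k} (p^j / j!) a_{n,j}| ≤ (k+1)! (Cp)^{k+1} hold for all n, all k ∈ ℕ, and all p ∈ [0,1]. Then for every j ∈ ℕ the limit a_j := lim_{n→∞} a_{n,j} exists in ℝ, satisfies |a_j| ≤ (j!)^2 C^j, and the limit function satisfies |f(p) − ∑_{j=0}^{k} (p^j / j!) a_j| ≤ (k+1)! (Cp)^{k+1} for all k ∈ ℕ and p ∈ [0,1]. -/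
open Filter Finset Set

/-- Passage to the limit in the approximation parameters: if `f_n → f` pointwise on `[0,1]`,
the coefficients `a_{n,j}` satisfy `|a_{n,j}| ≤ (j!)^2 C^j`, and the uniform Taylor remainder
bounds `|f_n(p) − ∑_{j≤k} (p^j/j!) a_{n,j}| ≤ (k+1)! (Cp)^{k+1}` hold, then the limits
`a_j = lim_n a_{n,j}` exist, satisfy the same bounds, and the limit function satisfies the
same Taylor remainder bounds. -/
theorem taylor_coefficients_pass_to_limit
    (C : ℝ) (hC : 0 ≤ C)
    (f : ℕ → ℝ → ℝ) (g : ℝ → ℝ)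
    (a : ℕ → ℕ → ℝ)
    (hlim : ∀ p ∈ Icc (0 : ℝ) 1, Tendsto (fun n => f n p) atTop (nhds (g p)))
    (hcoef : ∀ n j, |a n j| ≤ (Nat.factorial j : ℝ) ^ 2 * C ^ j)
    (hrem : ∀ n (k : ℕ), ∀ p ∈ Icc (0 : ℝ) 1,
      |f n p - ∑ j ∈ range (k + 1), p ^ j / (Nat.factorial j : ℝ) * a n j|
        ≤ (Nat.factorial (k + 1) : ℝ) * (C * p) ^ (k + 1)) :
    ∃ A : ℕ → ℝ,
      (∀ j, Tendsto (fun n => a n j) atTop (nhds (A j)))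
      ∧ (∀ j, |A j| ≤ (Nat.factorial j : ℝ) ^ 2 * C ^ j)
      ∧ ∀ (k : ℕ), ∀ p ∈ Icc (0 : ℝ) 1,
          |g p - ∑ j ∈ range (k + 1), p ^ j / (Nat.factorial j : ℝ) * A j|
            ≤ (Nat.factorial (k + 1) : ℝ) * (C * p) ^ (k + 1) := by
  have key : ∀ j, ∃ L, Tendsto (fun n => a n j) atTop (nhds L) := by
    intro j
    induction j using Nat.strong_induction_on with
    | _ j ih =>
    choose A hA using ih
    have hcauchy : CauchySeq (fun n => a n j) := by
      rw [Metric.cauchySeq_iff]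
      intro ε hε
      set D : ℝ := (Nat.factorial j : ℝ) * (Nat.factorial (j + 1) : ℝ) * C ^ (j + 1) with hD
      have hD0 : 0 ≤ D := by positivity
      have h8 : (0:ℝ) < 8 * (D + 1) := by nlinarith
      set p : ℝ := min 1 (ε / (8 * (D + 1))) with hp
      have hp0 : 0 < p := lt_min one_pos (div_pos hε h8)
      have hp1 : p ≤ 1 := min_le_left _ _
      have hpmem : p ∈ Icc (0:ℝ) 1 := ⟨hp0.le, hp1⟩
      set t : ℕ → ℝ := fun n => (Nat.factorial j : ℝ) / p ^ j *
        (f n p - ∑ i ∈ range j, p ^ i / (Nat.factorial i : ℝ) * a n i) with ht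
      have htlim : Tendsto t atTop (nhds ((Nat.factorial j : ℝ) / p ^ j *
          (g p - ∑ i ∈ range j, p ^ i / (Nat.factorial i : ℝ) *
            (if h : i < j then A i h else 0)))) := by
        apply Tendsto.const_mul
        apply Tendsto.sub (hlim p hpmem)
        apply tendsto_finset_sum
        intro i hi
        rw [dif_pos (mem_range.mp hi)]
        exact (hA i (mem_range.mp hi)).const_mul _
      have htc : CauchySeq t := htlim.cauchySeq
      have hfac : (0:ℝ) < (Nat.factorial j : ℝ) := by positivity
      have hpj : (0:ℝ) < p ^ j := pow_pos hp0 j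
      have hclose : ∀ n, |a n j - t n| ≤ D * p := by
        intro n
        have hr := hrem n j p hpmem
        have hsum : ∑ i ∈ range (j + 1), p ^ i / (Nat.factorial i : ℝ) * a n i
            = (∑ i ∈ range j, p ^ i / (Nat.factorial i : ℝ) * a n i)
              + p ^ j / (Nat.factorial j : ℝ) * a n j :=
          Finset.sum_range_succ _ j
        have he : a n j - t n = -((Nat.factorial j : ℝ) / p ^ j *
            (f n p - ∑ i ∈ range (j + 1), p ^ i / (Nat.factorial i : ℝ) * a n i)) := by
          simp only [ht, hsum]
          field_simp
          ring
        rw [he, abs_neg, abs_mul, abs_of_pos (div_pos hfac hpj)]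
        calc (Nat.factorial j : ℝ) / p ^ j *
              |f n p - ∑ i ∈ range (j + 1), p ^ i / (Nat.factorial i : ℝ) * a n i|
            ≤ (Nat.factorial j : ℝ) / p ^ j *
              ((Nat.factorial (j + 1) : ℝ) * (C * p) ^ (j + 1)) :=
              mul_le_mul_of_nonneg_left hr (le_of_lt (div_pos hfac hpj))
          _ = D * p := by
              rw [hD, mul_pow, pow_succ]
              field_simp
              ring
      obtain ⟨N, hN⟩ := Metric.cauchySeq_iff.mp htc (ε / 2) (by positivity)
      refine ⟨N, fun m hm n hn => ?_⟩
      have h1 := hclose m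
      have h2 := hclose n
      have h3 := hN m hm n hn
      rw [Real.dist_eq] at h3 ⊢
      have hDp : D * p ≤ ε / 8 := by
        have hple : p ≤ ε / (8 * (D + 1)) := min_le_right _ _
        calc D * p ≤ (D + 1) * (ε / (8 * (D + 1))) :=
              mul_le_mul (by linarith) hple hp0.le (by linarith)
          _ = ε / 8 := by field_simp
      have tri : |a m j - a n j| ≤ |a m j - t m| + (|t m - t n| + |t n - a n j|) :=
        le_trans (abs_sub_le _ (t m) _) (add_le_add le_rfl (abs_sub_le _ (t n) _))
      have h2' : |t n - a n j| ≤ D * p := by rw [abs_sub_comm]; exact h2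
      linarith
    exact cauchySeq_tendsto_of_complete hcauchy
  choose A hA using key
  refine ⟨A, hA, ?_, ?_⟩
  · intro j
    exact le_of_tendsto (hA j).abs (Filter.Eventually.of_forall fun n => hcoef n j)
  · intro k p hp
    have hsumlim : Tendsto
        (fun n => |f n p - ∑ i ∈ range (k + 1), p ^ i / (Nat.factorial i : ℝ) * a n i|)
        atTop (nhds |g p - ∑ i ∈ range (k + 1), p ^ i / (Nat.factorial i : ℝ) * A i|) := by
      apply Tendsto.abs
      exact Tendsto.sub (hlim p hp)
        (tendsto_finset_sum _ fun i _ => (hA i).const_mul _)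
    exact le_of_tendsto hsumlim (Filter.Eventually.of_forall fun n => hrem n k p hp)
end
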